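/- Let P = {x ∈ ℝⁿ : Ax = b, Bx ≤ d} be a 0/1 polytope, let c ∈ ℤⁿ, and let x be a vertex of P that does not minimize cᵀx over P. Then the maximum of −cᵀg/‖g‖₁ over all circuits g ∈ C(A,B) with x + εg ∈ P for some ε > 0 is attained by a circuit that is an edge-direction of P at x, i.e., that spans an extreme ray of the feasible cone of P at x. -/

import Mathlib

noncomputable section

variable {n mA mB : ℕ}

/-- The real matrix obtained from an integer matrix. -/
def rmat {m k : Type*} (M : Matrix m k ℤ) : Matrix m k ℝ := M.map (fun z => (z : ℝ))

/-- The real vector obtained from an integer vector. -/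
def rvec {m : Type*} (v : m → ℤ) : m → ℝ := fun i => (v i : ℝ)

/-- The feasible region `P = {x : Ax = b, Bx ≤ d}`. -/
def Pset (A : Matrix (Fin mA) (Fin n) ℤ) (B : Matrix (Fin mB) (Fin n) ℤ)
    (b : Fin mA → ℤ) (d : Fin mB → ℤ) : Set (Fin n → ℝ) :=
  {x | (rmat A).mulVec x = rvec b ∧ ∀ i, (rmat B).mulVec x i ≤ (d i : ℝ)}

/-- `g` is a circuit of the system `Ax = b, Bx ≤ d`:  `g` is a nonzero kernel element of `A`
whose image `Bg` is support-minimal among `{By : y ∈ ker A, y ≠ 0}`. -/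
def IsCircuit (A : Matrix (Fin mA) (Fin n) ℤ) (B : Matrix (Fin mB) (Fin n) ℤ)
    (g : Fin n → ℝ) : Prop :=
  g ≠ 0 ∧ (rmat A).mulVec g = 0 ∧
    ∀ y : Fin n → ℝ, y ≠ 0 → (rmat A).mulVec y = 0 →
      ¬ ({i | (rmat B).mulVec y i ≠ 0} ⊂ {i | (rmat B).mulVec g i ≠ 0})

/-- The set `C(A,B)` of circuits, normalized to have coprime integer components. -/
def CAB (A : Matrix (Fin mA) (Fin n) ℤ) (B : Matrix (Fin mB) (Fin n) ℤ) :
    Set (Fin n → ℝ) :=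
  {g | IsCircuit A B g ∧ ∃ gz : Fin n → ℤ, (∀ i, g i = (gz i : ℝ)) ∧
        Finset.univ.gcd (fun i => (gz i).natAbs) = 1}

/-- `cᵀx` for an integer objective `c` and a real point `x`. -/
def dotIC (c : Fin n → ℤ) (x : Fin n → ℝ) : ℝ := ∑ i, (c i : ℝ) * x i

/-- The 1-norm of a vector. -/
def norm1 (x : Fin n → ℝ) : ℝ := ∑ i, |x i|

/-- `α g` is a maximal augmentation at `x` (within `P`). -/
def IsMaxAug (P : Set (Fin n → ℝ)) (x g : Fin n → ℝ) (α : ℝ) : Prop :=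
  0 < α ∧ x + α • g ∈ P ∧ ∀ ε : ℝ, 0 < ε → x + (α + ε) • g ∉ P

/-- `δ`: the largest absolute value of the determinant of an `n × n` submatrix of the
stacked matrix `(A; B)`. -/
def deltaMax (A : Matrix (Fin mA) (Fin n) ℤ) (B : Matrix (Fin mB) (Fin n) ℤ) : ℝ :=
  sSup {r : ℝ | ∃ f : Fin n → (Fin mA ⊕ Fin mB), Function.Injective f ∧
        r = |((((Matrix.fromRows A B).submatrix f id).det : ℤ) : ℝ)|}

/-- The feasible cone of `P = {Ax = b, Bx ≤ d}` at `x`: directions `z` with `Az = 0` and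
`B_T z ≤ 0`, where `T` is the set of rows of `B` tight at `x`. -/
def feasCone (A : Matrix (Fin mA) (Fin n) ℤ) (B : Matrix (Fin mB) (Fin n) ℤ)
    (d : Fin mB → ℤ) (x : Fin n → ℝ) : Set (Fin n → ℝ) :=
  {z | (rmat A).mulVec z = 0 ∧
       ∀ i, (rmat B).mulVec x i = (d i : ℝ) → (rmat B).mulVec z i ≤ 0}

/-- `g` is an edge-direction at the vertex `x`: it spans an extreme ray of the feasible
cone of `P` at `x`. -/
def IsEdgeDirAt (A : Matrix (Fin mA) (Fin n) ℤ) (B : Matrix (Fin mB) (Fin n) ℤ)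
    (d : Fin mB → ℤ) (x g : Fin n → ℝ) : Prop :=
  g ≠ 0 ∧ g ∈ feasCone A B d x ∧
    ∀ y ∈ feasCone A B d x, ∀ z ∈ feasCone A B d x, g = y + z →
      ∃ μ : ℝ, 0 ≤ μ ∧ y = μ • g

-- linear functional
def dotLin (v : Fin n → ℝ) : (Fin n → ℝ) →ₗ[ℝ] ℝ where
  toFun z := ∑ i, v i * z i
  map_add' y z := by simp [mul_add, Finset.sum_add_distrib]
  map_smul' t z := by
    simp only [Pi.smul_apply, smul_eq_mul, RingHom.id_apply, Finset.mul_sum]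
    exact Finset.sum_congr rfl fun i _ => by ring

lemma dotLin_apply (v z : Fin n → ℝ) : dotLin v z = ∑ i, v i * z i := rfl

lemma mulVec_eq_dotLin {m : ℕ} (M : Matrix (Fin m) (Fin n) ℤ) (z : Fin n → ℝ) (i : Fin m) :
    (rmat M).mulVec z i = dotLin (fun j => (M i j : ℝ)) z := rfl

lemma aux_natAbs_gcd {ι : Type*} (s : Finset ι) (f : ι → ℤ) :
    (s.gcd f).natAbs = s.gcd fun i => (f i).natAbs := by
  classical
  induction s using Finset.induction_on with
  | empty => simp
  | insert _ _ ha ih =>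
      rw [Finset.gcd_insert, Finset.gcd_insert, ← ih]
      rfl

lemma aux_exists_int_kernel {m : Type*} [Fintype m] {k : ℕ} (M : Matrix m (Fin k) ℤ) (v : Fin k → ℝ)
    (hv : v ≠ 0) (hMv : (rmat M).mulVec v = 0) :
    ∃ w : Fin k → ℤ, w ≠ 0 ∧ (rmat M).mulVec (rvec w) = 0 := by
  classical
  set V : Submodule ℚ ℝ := Submodule.span ℚ (Set.range v) with hV
  have hvV : ∀ j, v j ∈ V := fun j => Submodule.subset_span ⟨j, rfl⟩
  set vV : Fin k → V := fun j => ⟨v j, hvV j⟩ with hvVdef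
  set bs := Module.Basis.ofVectorSpace ℚ V with hbs
  have key : ∀ i : m, ∑ j, (M i j : ℚ) • vV j = 0 := by
    intro i
    have h0 : ∑ j, (M i j : ℝ) * v j = 0 := congrFun hMv i
    apply Subtype.ext
    push_cast [Submodule.coe_sum]
    simpa [Rat.smul_def] using h0
  have keyr : ∀ i : m, ∑ j, (M i j : ℚ) • bs.repr (vV j) = 0 := by
    intro i
    have := congrArg bs.repr (key i)
    simpa [map_sum, map_smul] using this
  obtain ⟨j0, hj0⟩ : ∃ j0, v j0 ≠ 0 := by
    by_contra h
    push_neg at h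
    exact hv (funext h)
  have hvV0 : vV j0 ≠ 0 := fun h => hj0 (congrArg Subtype.val h)
  have hrep0 : bs.repr (vV j0) ≠ 0 := fun h => hvV0 (by simpa using bs.repr.map_eq_zero_iff.mp h)
  obtain ⟨t0, ht0⟩ := Finsupp.ne_iff.mp hrep0
  set u : Fin k → ℚ := fun j => bs.repr (vV j) t0 with hu
  have hu0 : u j0 ≠ 0 := by simpa [hu] using ht0
  have huk : ∀ i : m, ∑ j, (M i j : ℚ) * u j = 0 := by
    intro i
    have := congrFun (congrArg (⇑) (keyr i)) t0
    simpa [Finsupp.finset_sum_apply, Finsupp.smul_apply, smul_eq_mul, hu] using this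
  -- clear denominators
  set N : ℕ := ∏ j, (u j).den with hN
  have hdvd : ∀ j, (u j).den ∣ N := fun j => Finset.dvd_prod_of_mem _ (Finset.mem_univ j)
  have hNne : N ≠ 0 := Finset.prod_ne_zero_iff.mpr fun j _ => (u j).den_nz
  set w : Fin k → ℤ := fun j => (u j).num * ((N / (u j).den : ℕ) : ℤ) with hw
  have hwq : ∀ j, (w j : ℚ) = u j * N := by
    intro j
    have hmul : ((u j).den : ℚ) * ((N / (u j).den : ℕ) : ℚ) = (N : ℚ) := by
      rw [← Nat.cast_mul, Nat.mul_div_cancel' (hdvd j)]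
    calc (w j : ℚ) = ((u j).num : ℚ) * ((N / (u j).den : ℕ) : ℚ) := by
          rw [hw]; rw [Int.cast_mul, Int.cast_natCast]
    _ = u j * (((u j).den : ℚ) * ((N / (u j).den : ℕ) : ℚ)) := by
          rw [← Rat.mul_den_eq_num]; ring
    _ = u j * N := by rw [hmul]
  have hw0 : w ≠ 0 := by
    intro h
    have : (w j0 : ℚ) = 0 := by rw [congrFun h j0]; simp
    rw [hwq j0] at this
    rcases mul_eq_zero.mp this with h' | h'
    · exact hu0 h'
    · exact hNne (by exact_mod_cast h')
  refine ⟨w, hw0, ?_⟩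
  funext i
  have hQ : ∑ j, (M i j : ℚ) * (w j : ℚ) = 0 := by
    have : ∑ j, (M i j : ℚ) * (u j * N) = (∑ j, (M i j : ℚ) * u j) * N := by
      rw [Finset.sum_mul]; exact Finset.sum_congr rfl fun j _ => by ring
    simp only [hwq]
    rw [this, huk i, zero_mul]
  have hZ : ∑ j, M i j * w j = 0 := by
    have : ((∑ j, M i j * w j : ℤ) : ℚ) = 0 := by push_cast; exact hQ
    exact_mod_cast this
  show ∑ j, (M i j : ℝ) * ((w j : ℤ) : ℝ) = 0
  have : ((∑ j, M i j * w j : ℤ) : ℝ) = 0 := by rw [hZ]; simp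
  push_cast at this
  exact this

lemma aux_Pset_convex (A : Matrix (Fin mA) (Fin n) ℤ) (B : Matrix (Fin mB) (Fin n) ℤ)
    (b : Fin mA → ℤ) (d : Fin mB → ℤ) : Convex ℝ (Pset A B b d) := by
  intro p hp q hq a a' ha ha' haa
  refine ⟨?_, ?_⟩
  · rw [Matrix.mulVec_add, Matrix.mulVec_smul, Matrix.mulVec_smul, hp.1, hq.1,
      ← add_smul, haa, one_smul]
  · intro i
    have h1 := hp.2 i
    have h2 := hq.2 i
    have : (rmat B).mulVec (a • p + a' • q) i
        = a * (rmat B).mulVec p i + a' * (rmat B).mulVec q i := by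
      rw [Matrix.mulVec_add, Matrix.mulVec_smul, Matrix.mulVec_smul]
      simp
    rw [this]
    have hd : a * (d i : ℝ) + a' * (d i : ℝ) = (d i : ℝ) := by
      linear_combination (d i : ℝ) * haa
    nlinarith [mul_le_mul_of_nonneg_left h1 ha, mul_le_mul_of_nonneg_left h2 ha']

lemma aux_Pset_closed (A : Matrix (Fin mA) (Fin n) ℤ) (B : Matrix (Fin mB) (Fin n) ℤ)
    (b : Fin mA → ℤ) (d : Fin mB → ℤ) : IsClosed (Pset A B b d) := by
  have h1 : IsClosed {x : Fin n → ℝ | (rmat A).mulVec x = rvec b} := by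
    have : Continuous fun x : Fin n → ℝ => (rmat A).mulVec x := by
      have := ((rmat A).mulVecLin).continuous_of_finiteDimensional
      exact this
    exact isClosed_eq this continuous_const
  have h2 : IsClosed {x : Fin n → ℝ | ∀ i, (rmat B).mulVec x i ≤ (d i : ℝ)} := by
    have : {x : Fin n → ℝ | ∀ i, (rmat B).mulVec x i ≤ (d i : ℝ)}
        = ⋂ i, {x : Fin n → ℝ | (rmat B).mulVec x i ≤ (d i : ℝ)} := by
      ext x; simp
    rw [this]
    refine isClosed_iInter fun i => isClosed_le ?_ continuous_const
    exact (dotLin (fun j => (B i j : ℝ))).continuous_of_finiteDimensional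
  exact h1.inter h2

lemma aux_Pset_subset_box (A : Matrix (Fin mA) (Fin n) ℤ) (B : Matrix (Fin mB) (Fin n) ℤ)
    (b : Fin mA → ℤ) (d : Fin mB → ℤ)
    (hbdd : Bornology.IsBounded (Pset A B b d))
    (h01 : ∀ v ∈ Set.extremePoints ℝ (Pset A B b d), ∀ i, v i = 0 ∨ v i = 1) :
    ∀ p ∈ Pset A B b d, ∀ i, 0 ≤ p i ∧ p i ≤ 1 := by
  have hcomp : IsCompact (Pset A B b d) :=
    Metric.isCompact_of_isClosed_isBounded (aux_Pset_closed A B b d) hbdd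
  have hKM := closure_convexHull_extremePoints hcomp (aux_Pset_convex A B b d)
  set box : Set (Fin n → ℝ) := {y | ∀ i, 0 ≤ y i ∧ y i ≤ 1} with hbox
  have hboxconv : Convex ℝ box := by
    intro p hp q hq a a' ha ha' haa i
    constructor
    · have := (hp i).1; have := (hq i).1
      simp only [Pi.add_apply, Pi.smul_apply, smul_eq_mul]
      nlinarith
    · have := (hp i).2; have := (hq i).2
      simp only [Pi.add_apply, Pi.smul_apply, smul_eq_mul]
      nlinarith
  have hboxclosed : IsClosed box := by
    have : box = ⋂ i, ({y : Fin n → ℝ | 0 ≤ y i} ∩ {y : Fin n → ℝ | y i ≤ 1}) := by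
      ext y; simp [hbox, forall_and]
    rw [this]
    exact isClosed_iInter fun i =>
      (isClosed_le continuous_const (continuous_apply i)).inter
        (isClosed_le (continuous_apply i) continuous_const)
  have hsub : Pset A B b d ⊆ box := by
    rw [← hKM]
    refine closure_minimal (convexHull_min ?_ hboxconv) hboxclosed
    intro v hv i
    rcases h01 v hv i with h | h <;> simp [hbox, h]
  exact fun p hp i => hsub hp i

/-- feasibility from cone membership -/
lemma aux_feas_of_cone (A : Matrix (Fin mA) (Fin n) ℤ) (B : Matrix (Fin mB) (Fin n) ℤ)
    (b : Fin mA → ℤ) (d : Fin mB → ℤ) (x : Fin n → ℝ) (hxP : x ∈ Pset A B b d)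
    (z : Fin n → ℝ) (hz : z ∈ feasCone A B d x) :
    ∃ ε : ℝ, 0 < ε ∧ x + ε • z ∈ Pset A B b d := by
  classical
  set εf : Fin mB → ℝ := fun i =>
    if (rmat B).mulVec x i < (d i : ℝ)
    then ((d i : ℝ) - (rmat B).mulVec x i) / (|(rmat B).mulVec z i| + 1) else 1 with hεf
  have hεfpos : ∀ i, 0 < εf i := by
    intro i
    simp only [hεf]
    split_ifs with h
    · exact div_pos (by linarith) (by positivity)
    · norm_num
  by_cases hmb : Nonempty (Fin mB)
  · set ε := Finset.univ.inf' (Finset.univ_nonempty) εf with hε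
    have hεpos : 0 < ε := by
      rw [hε]
      exact (Finset.lt_inf'_iff _).mpr fun i _ => hεfpos i
    refine ⟨ε, hεpos, ?_, ?_⟩
    · rw [Matrix.mulVec_add, Matrix.mulVec_smul, hz.1, hxP.1]
      funext i; simp
    · intro i
      have hle : ε ≤ εf i := Finset.inf'_le _ (Finset.mem_univ i)
      have hBx : (rmat B).mulVec x i ≤ (d i : ℝ) := hxP.2 i
      have hrow : (rmat B).mulVec (x + ε • z) i
          = (rmat B).mulVec x i + ε * (rmat B).mulVec z i := by
        rw [Matrix.mulVec_add, Matrix.mulVec_smul]; simp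
      rw [hrow]
      by_cases htight : (rmat B).mulVec x i < (d i : ℝ)
      · have hεfi : εf i = ((d i : ℝ) - (rmat B).mulVec x i) / (|(rmat B).mulVec z i| + 1) := by
          rw [hεf]; simp [htight]
        have habs : ε * (rmat B).mulVec z i ≤ ε * |(rmat B).mulVec z i| := by
          have := le_abs_self ((rmat B).mulVec z i)
          nlinarith
        have h2 : ε * |(rmat B).mulVec z i|
            ≤ ((d i : ℝ) - (rmat B).mulVec x i) / (|(rmat B).mulVec z i| + 1)
              * |(rmat B).mulVec z i| := by
          have : ε ≤ ((d i : ℝ) - (rmat B).mulVec x i) / (|(rmat B).mulVec z i| + 1) := by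
            rw [← hεfi]; exact hle
          nlinarith [abs_nonneg ((rmat B).mulVec z i)]
        have h3 : ((d i : ℝ) - (rmat B).mulVec x i) / (|(rmat B).mulVec z i| + 1)
              * |(rmat B).mulVec z i| ≤ (d i : ℝ) - (rmat B).mulVec x i := by
          rw [div_mul_eq_mul_div, div_le_iff₀ (by positivity)]
          nlinarith [abs_nonneg ((rmat B).mulVec z i)]
        linarith
      · have heq : (rmat B).mulVec x i = (d i : ℝ) := le_antisymm hBx (not_lt.mp htight)
        have hzneg := hz.2 i heq
        nlinarith
  · refine ⟨1, one_pos, ?_, fun i => absurd ⟨i⟩ hmb⟩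
    rw [Matrix.mulVec_add, Matrix.mulVec_smul, hz.1, hxP.1]
    funext i; simp

/-- cone membership from feasibility -/
lemma aux_cone_of_feas (A : Matrix (Fin mA) (Fin n) ℤ) (B : Matrix (Fin mB) (Fin n) ℤ)
    (b : Fin mA → ℤ) (d : Fin mB → ℤ) (x : Fin n → ℝ) (hxP : x ∈ Pset A B b d)
    (z : Fin n → ℝ) (ε : ℝ) (hε : 0 < ε) (hmem : x + ε • z ∈ Pset A B b d) :
    z ∈ feasCone A B d x := by
  constructor
  · have h1 := hmem.1
    rw [Matrix.mulVec_add, Matrix.mulVec_smul, hxP.1] at h1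
    have h2 : ε • (rmat A).mulVec z = 0 := by
      have := congrArg (fun v => v - rvec b) h1
      simpa [add_sub_cancel_left] using this
    rcases smul_eq_zero.mp h2 with h | h
    · exact absurd h (ne_of_gt hε)
    · exact h
  · intro i htight
    have := hmem.2 i
    rw [Matrix.mulVec_add, Matrix.mulVec_smul] at this
    simp only [Pi.add_apply, Pi.smul_apply, smul_eq_mul, htight] at this
    nlinarith

lemma norm1_nonneg (z : Fin n → ℝ) : 0 ≤ norm1 z :=
  Finset.sum_nonneg fun i _ => abs_nonneg _

lemma norm1_pos {z : Fin n → ℝ} (hz : z ≠ 0) : 0 < norm1 z := by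
  obtain ⟨i, hi⟩ := Function.ne_iff.mp hz
  exact Finset.sum_pos' (fun j _ => abs_nonneg _)
    ⟨i, Finset.mem_univ i, abs_pos.mpr hi⟩

lemma norm1_eq_zero {z : Fin n → ℝ} (hz : norm1 z = 0) : z = 0 := by
  by_contra h
  exact absurd hz (ne_of_gt (norm1_pos h))

lemma dotIC_smul (c : Fin n → ℤ) (t : ℝ) (z : Fin n → ℝ) :
    dotIC c (t • z) = t * dotIC c z := by
  simp only [dotIC, Pi.smul_apply, smul_eq_mul, Finset.mul_sum]
  exact Finset.sum_congr rfl fun i _ => by ring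

lemma norm1_smul_nonneg {t : ℝ} (ht : 0 ≤ t) (z : Fin n → ℝ) :
    norm1 (t • z) = t * norm1 z := by
  simp only [norm1, Pi.smul_apply, smul_eq_mul, Finset.mul_sum]
  exact Finset.sum_congr rfl fun i _ => by rw [abs_mul, abs_of_nonneg ht]

set_option maxHeartbeats 3000000 in
/-- Lemma 14 of the paper: over a 0/1 polytope, the steepest-descent
circuit-pivot rule at a non-optimal vertex is attained by a circuit that is an
edge-direction of `P` at that vertex. -/
theorem steepest_descent_attained_by_edge
    (A : Matrix (Fin mA) (Fin n) ℤ) (B : Matrix (Fin mB) (Fin n) ℤ)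
    (b : Fin mA → ℤ) (d : Fin mB → ℤ) (c : Fin n → ℤ)
    (hmB : 1 ≤ mB)
    (hA : (rmat A).rank = mA)
    (hAB : (rmat (Matrix.fromRows A B)).rank = n)
    (hbdd : Bornology.IsBounded (Pset A B b d))
    (h01 : ∀ v ∈ Set.extremePoints ℝ (Pset A B b d), ∀ i, v i = 0 ∨ v i = 1)
    (x : Fin n → ℝ) (hx : x ∈ Set.extremePoints ℝ (Pset A B b d))
    (hnonopt : ∃ y ∈ Pset A B b d, dotIC c y < dotIC c x) :
    ∃ g : Fin n → ℝ, g ∈ CAB A B ∧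
      (∃ ε : ℝ, 0 < ε ∧ x + ε • g ∈ Pset A B b d) ∧
      (∀ g' : Fin n → ℝ, g' ∈ CAB A B →
        (∃ ε : ℝ, 0 < ε ∧ x + ε • g' ∈ Pset A B b d) →
        -(dotIC c g') / norm1 g' ≤ -(dotIC c g) / norm1 g) ∧
      IsEdgeDirAt A B d x g := by
  classical
  have hxP : x ∈ Pset A B b d := hx.1
  have hx01 : ∀ i, x i = 0 ∨ x i = 1 := h01 x hx
  set C := feasCone A B d x with hCdef
  set σ : Fin n → ℝ := fun i => 1 - 2 * x i with hσ
  set L := dotLin σ with hLdef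
  -- sign structure of the cone
  have hsgn : ∀ z ∈ C, ∀ i, σ i * z i = |z i| := by
    intro z hzC i
    obtain ⟨ε, hε, hmem⟩ := aux_feas_of_cone A B b d x hxP z hzC
    have hbox := aux_Pset_subset_box A B b d hbdd h01 _ hmem i
    simp only [Pi.add_apply, Pi.smul_apply, smul_eq_mul] at hbox
    rcases hx01 i with h0 | h1
    · have hzi : 0 ≤ z i := by
        rw [h0] at hbox; nlinarith [hbox.1]
      simp [hσ, h0, abs_of_nonneg hzi]
    · have hzi : z i ≤ 0 := by
        rw [h1] at hbox; nlinarith [hbox.2]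
      rw [abs_of_nonpos hzi]; simp [hσ, h1]; ring
  have hLnorm : ∀ z ∈ C, L z = norm1 z := by
    intro z hz
    rw [hLdef, dotLin_apply, norm1]
    exact Finset.sum_congr rfl fun i _ => hsgn z hz i
  -- cone is closed under nonnegative scaling
  have hCsmul : ∀ t : ℝ, 0 ≤ t → ∀ z ∈ C, t • z ∈ C := by
    intro t ht z hz
    refine ⟨by rw [Matrix.mulVec_smul, hz.1, smul_zero], fun i hi => ?_⟩
    rw [Matrix.mulVec_smul]
    simp only [Pi.smul_apply, smul_eq_mul]
    exact mul_nonpos_of_nonneg_of_nonpos ht (hz.2 i hi)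
  set Q : Set (Fin n → ℝ) := {z | z ∈ C ∧ L z = 1} with hQdef
  -- Q is nonempty
  have hQne : Q.Nonempty := by
    obtain ⟨y0, hy0P, hy0lt⟩ := hnonopt
    set w0 : Fin n → ℝ := y0 - x with hw0
    have hw0C : w0 ∈ C := by
      refine ⟨by rw [hw0, Matrix.mulVec_sub, hy0P.1, hxP.1, sub_self], fun i hi => ?_⟩
      rw [hw0, Matrix.mulVec_sub]
      simp only [Pi.sub_apply]
      have := hy0P.2 i
      linarith [hi]
    have hw0ne : w0 ≠ 0 := by
      intro h
      have : y0 = x := by rwa [hw0, sub_eq_zero] at h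
      rw [this] at hy0lt; exact lt_irrefl _ hy0lt
    have hw0pos : 0 < L w0 := by rw [hLnorm w0 hw0C]; exact norm1_pos hw0ne
    refine ⟨(L w0)⁻¹ • w0, hCsmul _ (inv_nonneg.mpr hw0pos.le) _ hw0C, ?_⟩
    rw [map_smul, smul_eq_mul, inv_mul_cancel₀ (ne_of_gt hw0pos)]
  -- Q is compact
  have hQcomp : IsCompact Q := by
    have hQclosed : IsClosed Q := by
      have h1 : IsClosed {z : Fin n → ℝ | (rmat A).mulVec z = 0} := by
        have : Continuous fun z : Fin n → ℝ => (rmat A).mulVec z := by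
          have := ((rmat A).mulVecLin).continuous_of_finiteDimensional
          exact this
        exact isClosed_eq this continuous_const
      have h2 : IsClosed {z : Fin n → ℝ |
          ∀ i, (rmat B).mulVec x i = (d i : ℝ) → (rmat B).mulVec z i ≤ 0} := by
        have : {z : Fin n → ℝ | ∀ i, (rmat B).mulVec x i = (d i : ℝ) → (rmat B).mulVec z i ≤ 0}
            = ⋂ i, {z : Fin n → ℝ | (rmat B).mulVec x i = (d i : ℝ) → (rmat B).mulVec z i ≤ 0} := by
          ext z; simp
        rw [this]
        refine isClosed_iInter fun i => ?_
        by_cases hi : (rmat B).mulVec x i = (d i : ℝ)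
        · have : {z : Fin n → ℝ | (rmat B).mulVec x i = (d i : ℝ) → (rmat B).mulVec z i ≤ 0}
              = {z : Fin n → ℝ | (rmat B).mulVec z i ≤ 0} := by
            ext z; simp [hi]
          rw [this]
          exact isClosed_le ((dotLin (fun j => (B i j : ℝ))).continuous_of_finiteDimensional)
            continuous_const
        · have : {z : Fin n → ℝ | (rmat B).mulVec x i = (d i : ℝ) → (rmat B).mulVec z i ≤ 0}
              = Set.univ := by
            ext z; simp [hi]
          rw [this]; exact isClosed_univ
      have h3 : IsClosed {z : Fin n → ℝ | L z = 1} :=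
        isClosed_eq (L.continuous_of_finiteDimensional) continuous_const
      have : Q = ({z : Fin n → ℝ | (rmat A).mulVec z = 0} ∩
          {z : Fin n → ℝ | ∀ i, (rmat B).mulVec x i = (d i : ℝ) → (rmat B).mulVec z i ≤ 0}) ∩
          {z : Fin n → ℝ | L z = 1} := by
        ext z
        constructor
        · rintro ⟨⟨hz1, hz2⟩, hz3⟩; exact ⟨⟨hz1, hz2⟩, hz3⟩
        · rintro ⟨⟨hz1, hz2⟩, hz3⟩; exact ⟨⟨hz1, hz2⟩, hz3⟩
      rw [this]
      exact (h1.inter h2).inter h3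
    have hQbdd : Bornology.IsBounded Q := by
      refine (Metric.isBounded_closedBall (x := (0 : Fin n → ℝ)) (r := 1)).subset ?_
      intro z hz
      rw [Metric.mem_closedBall, dist_zero_right]
      rw [pi_norm_le_iff_of_nonneg zero_le_one]
      intro i
      rw [Real.norm_eq_abs]
      have h1 : |z i| ≤ norm1 z := Finset.single_le_sum
        (fun j (_ : j ∈ Finset.univ) => abs_nonneg (z j)) (Finset.mem_univ i)
      rw [← hLnorm z hz.1, hz.2] at h1
      exact h1
    exact Metric.isCompact_of_isClosed_isBounded hQclosed hQbdd
  -- the objective functional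
  set Lc := dotLin (fun i => -(c i : ℝ)) with hLcdef
  have hLcdot : ∀ z, Lc z = -(dotIC c z) := by
    intro z
    rw [hLcdef, dotLin_apply, dotIC, ← Finset.sum_neg_distrib]
    exact Finset.sum_congr rfl fun i _ => by ring
  set Lcc := LinearMap.toContinuousLinearMap Lc with hLccdef
  have hLccapp : ∀ z, Lcc z = Lc z := fun z => rfl
  -- the optimal face and an extreme point of it
  set F : Set (Fin n → ℝ) := {z ∈ Q | ∀ w ∈ Q, Lcc w ≤ Lcc z} with hFdef
  have hFne : F.Nonempty := by
    obtain ⟨z1, hz1Q, hz1max⟩ := hQcomp.exists_isMaxOn hQne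
      (Lcc.continuous.continuousOn)
    exact ⟨z1, hz1Q, fun w hw => hz1max hw⟩
  have hFcomp : IsCompact F := by
    have hclosed : IsClosed {z : Fin n → ℝ | ∀ w ∈ Q, Lcc w ≤ Lcc z} := by
      have : {z : Fin n → ℝ | ∀ w ∈ Q, Lcc w ≤ Lcc z}
          = ⋂ w ∈ Q, {z : Fin n → ℝ | Lcc w ≤ Lcc z} := by
        ext z; simp
      rw [this]
      exact isClosed_biInter fun w _ => isClosed_le continuous_const Lcc.continuous
    have : F = Q ∩ {z : Fin n → ℝ | ∀ w ∈ Q, Lcc w ≤ Lcc z} := rfl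
    rw [this]
    exact hQcomp.inter_right hclosed
  obtain ⟨zs, hzsF⟩ := hFcomp.extremePoints_nonempty hFne
  have hexp : IsExposed ℝ Q F := fun _ => ⟨Lcc, rfl⟩
  have hzsQext : zs ∈ Set.extremePoints ℝ Q :=
    hexp.isExtreme.extremePoints_subset_extremePoints hzsF
  have hzsFmem : zs ∈ F := hzsF.1
  have hzsQ : zs ∈ Q := hzsFmem.1
  have hzsC : zs ∈ C := hzsQ.1
  have hmaxQ : ∀ w ∈ Q, Lc w ≤ Lc zs := fun w hw => hzsFmem.2 w hw
  have hzsne : zs ≠ 0 := by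
    intro h
    have := hzsQ.2
    rw [h, map_zero] at this
    exact zero_ne_one this
  haveI : Nonempty (Fin mB) := ⟨⟨0, hmB⟩⟩
  -- key: anything vanishing where B zs vanishes (and in ker A) is a multiple of zs
  have hkey : ∀ w : Fin n → ℝ, (rmat A).mulVec w = 0 →
      (∀ i, (rmat B).mulVec zs i = 0 → (rmat B).mulVec w i = 0) →
      ∃ t : ℝ, w = t • zs := by
    intro w hAw hBw
    set εb : Fin mB → ℝ := fun i =>
      if (rmat B).mulVec zs i < 0
      then (-(rmat B).mulVec zs i) / (|(rmat B).mulVec w i| + 1) else 1 with hεb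
    have hεbpos : ∀ i, 0 < εb i := by
      intro i
      simp only [hεb]
      split_ifs with h
      · exact div_pos (by linarith) (by positivity)
      · norm_num
    set ε : ℝ := min (Finset.univ.inf' Finset.univ_nonempty εb) (1 / (|L w| + 1)) with hε
    have hεpos : 0 < ε := by
      refine lt_min ?_ (by positivity)
      exact (Finset.lt_inf'_iff _).mpr fun i _ => hεbpos i
    have hεL : |ε * L w| < 1 := by
      rw [abs_mul, abs_of_pos hεpos]
      have h1 : ε ≤ 1 / (|L w| + 1) := min_le_right _ _
      have h2 : 0 ≤ |L w| := abs_nonneg _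
      have h3 : ε * |L w| ≤ (1 / (|L w| + 1)) * |L w| := by nlinarith
      have h4 : (1 / (|L w| + 1)) * |L w| < 1 := by
        rw [div_mul_eq_mul_div, div_lt_iff₀ (by positivity)]
        nlinarith
      linarith
    have hcone : ∀ s : ℝ, |s| ≤ ε → zs + s • w ∈ C := by
      intro s hs
      refine ⟨by rw [Matrix.mulVec_add, Matrix.mulVec_smul, hzsC.1, hAw, smul_zero, add_zero],
        fun i hi => ?_⟩
      rw [Matrix.mulVec_add, Matrix.mulVec_smul]
      simp only [Pi.add_apply, Pi.smul_apply, smul_eq_mul]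
      by_cases hzlt : (rmat B).mulVec zs i < 0
      · have hεbi : ε ≤ εb i :=
          le_trans (min_le_left _ _) (Finset.inf'_le _ (Finset.mem_univ i))
        have hεbival : εb i = (-(rmat B).mulVec zs i) / (|(rmat B).mulVec w i| + 1) := by
          simp only [hεb]; rw [if_pos hzlt]
        have h1 : s * (rmat B).mulVec w i ≤ |s| * |(rmat B).mulVec w i| := by
          calc s * (rmat B).mulVec w i ≤ |s * (rmat B).mulVec w i| := le_abs_self _
          _ = |s| * |(rmat B).mulVec w i| := abs_mul _ _
        have h2 : |s| * |(rmat B).mulVec w i| ≤ εb i * |(rmat B).mulVec w i| := by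
          have := le_trans hs hεbi
          nlinarith [abs_nonneg ((rmat B).mulVec w i), abs_nonneg s]
        have h3 : εb i * |(rmat B).mulVec w i| ≤ -(rmat B).mulVec zs i := by
          rw [hεbival, div_mul_eq_mul_div, div_le_iff₀ (by positivity)]
          nlinarith [abs_nonneg ((rmat B).mulVec w i)]
        linarith
      · have h0 : (rmat B).mulVec zs i = 0 :=
          le_antisymm (hzsC.2 i hi) (not_lt.mp hzlt)
        rw [hBw i h0, h0, mul_zero, add_zero]
    have habs : ∀ u : ℝ, -1 < u → 0 < 1 + u := fun u hu => by linarith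
    have hbounds := abs_lt.mp hεL
    have hLppos : 0 < 1 + ε * L w := by linarith [hbounds.1]
    have hLmpos : 0 < 1 - ε * L w := by linarith [hbounds.2]
    set zp := zs + ε • w with hzp
    set zm := zs + (-ε) • w with hzm
    have hzpC : zp ∈ C := hcone ε (by rw [abs_of_pos hεpos])
    have hzmC : zm ∈ C := hcone (-ε) (by rw [abs_neg, abs_of_pos hεpos])
    have hLzp : L zp = 1 + ε * L w := by
      rw [hzp, map_add, map_smul, hzsQ.2, smul_eq_mul]
    have hLzm : L zm = 1 - ε * L w := by
      rw [hzm, map_add, map_smul, hzsQ.2, smul_eq_mul]; ring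
    set p := (1 + ε * L w)⁻¹ • zp with hp
    set q := (1 - ε * L w)⁻¹ • zm with hq
    have hpQ : p ∈ Q := by
      refine ⟨hCsmul _ (inv_nonneg.mpr hLppos.le) _ hzpC, ?_⟩
      rw [hp, map_smul, smul_eq_mul, hLzp, inv_mul_cancel₀ (ne_of_gt hLppos)]
    have hqQ : q ∈ Q := by
      refine ⟨hCsmul _ (inv_nonneg.mpr hLmpos.le) _ hzmC, ?_⟩
      rw [hq, map_smul, smul_eq_mul, hLzm, inv_mul_cancel₀ (ne_of_gt hLmpos)]
    have hseg : zs ∈ openSegment ℝ p q := by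
      refine ⟨(1 + ε * L w) / 2, (1 - ε * L w) / 2, by linarith, by linarith, by ring, ?_⟩
      rw [hp, hq, smul_smul, smul_smul]
      have e1 : (1 + ε * L w) / 2 * (1 + ε * L w)⁻¹ = 1 / 2 := by
        field_simp
      have e2 : (1 - ε * L w) / 2 * (1 - ε * L w)⁻¹ = 1 / 2 := by
        field_simp
      rw [e1, e2, hzp, hzm]
      module
    have hps := (hzsQext.2 hpQ hqQ hseg)
    -- p = zs, so zp = (1 + ε L w) • zs
    have hzp_eq : zp = (1 + ε * L w) • zs := by
      rw [← hps, hp, smul_smul, mul_inv_cancel₀ (ne_of_gt hLppos), one_smul]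
    have hw_eq : ε • w = (ε * L w) • zs := by
      have := hzp_eq
      rw [hzp] at this
      have h2 : ε • w = (1 + ε * L w) • zs - zs := by
        rw [← this]; abel
      rw [h2, add_smul, one_smul]
      abel
    refine ⟨L w, ?_⟩
    have h5 := congrArg (fun v => ε⁻¹ • v) hw_eq
    simp only [smul_smul] at h5
    rw [inv_mul_cancel₀ (ne_of_gt hεpos), one_smul] at h5
    have h6 : ε⁻¹ * (ε * L w) = L w := by
      field_simp
    rw [h6] at h5
    exact h5
    -- support minimality of zs
  have hmin : ∀ y : Fin n → ℝ, y ≠ 0 → (rmat A).mulVec y = 0 →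
      ¬ ({i | (rmat B).mulVec y i ≠ 0} ⊂ {i | (rmat B).mulVec zs i ≠ 0}) := by
    intro y hy hAy hss
    have hsub : ∀ i, (rmat B).mulVec zs i = 0 → (rmat B).mulVec y i = 0 := by
      intro i h0
      by_contra hne
      exact (hss.1 (Set.mem_setOf_eq ▸ hne : i ∈ {i | (rmat B).mulVec y i ≠ 0})) h0
    obtain ⟨t, ht⟩ := hkey y hAy hsub
    have htne : t ≠ 0 := by
      intro h; rw [h, zero_smul] at ht; exact hy ht
    have heqset : {i | (rmat B).mulVec y i ≠ 0} = {i | (rmat B).mulVec zs i ≠ 0} := by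
      ext i
      rw [ht, Matrix.mulVec_smul]
      simp only [Set.mem_setOf_eq, Pi.smul_apply, smul_eq_mul, ne_eq, mul_eq_zero, not_or]
      constructor
      · rintro ⟨-, h⟩; exact h
      · intro h; exact ⟨htne, h⟩
    rw [heqset] at hss
    exact (ssubset_irrefl _) hss
  -- rationality: an integer vector in the direction of zs
  set B2 : Matrix (Fin mB) (Fin n) ℤ := Matrix.of fun i j =>
    if (rmat B).mulVec zs i = 0 then B i j else 0 with hB2
  set M0 : Matrix (Fin mA ⊕ Fin mB) (Fin n) ℤ := Matrix.fromRows A B2 with hM0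
  have hM0mul : ∀ v : Fin n → ℝ,
      (rmat M0).mulVec v = Sum.elim ((rmat A).mulVec v) ((rmat B2).mulVec v) := by
    intro v
    have : rmat M0 = Matrix.fromRows (rmat A) (rmat B2) := by
      ext r j
      cases r with
      | inl i => simp [rmat, hM0, Matrix.map_apply]
      | inr i => simp [rmat, hM0, Matrix.map_apply]
    rw [this, Matrix.fromRows_mulVec]
  have hB2row : ∀ (v : Fin n → ℝ) (i : Fin mB), (rmat B2).mulVec v i
      = if (rmat B).mulVec zs i = 0 then (rmat B).mulVec v i else 0 := by
    intro v i
    by_cases h : (rmat B).mulVec zs i = 0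
    · rw [if_pos h]
      show ∑ j, ((B2 i j : ℤ) : ℝ) * v j = ∑ j, ((B i j : ℤ) : ℝ) * v j
      refine Finset.sum_congr rfl fun j _ => ?_
      simp [hB2, h]
    · rw [if_neg h]
      show ∑ j, ((B2 i j : ℤ) : ℝ) * v j = 0
      refine Finset.sum_eq_zero fun j _ => ?_
      simp [hB2, h]
  have hM0zs : (rmat M0).mulVec zs = 0 := by
    rw [hM0mul zs]
    funext r
    cases r with
    | inl i => simpa using congrFun hzsC.1 i
    | inr i =>
        rw [Sum.elim_inr, hB2row]
        simp only [Pi.zero_apply]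
        split_ifs with h
        · exact h
        · rfl
  obtain ⟨w1, hw1ne, hw1ker⟩ := aux_exists_int_kernel M0 zs hzsne hM0zs
  rw [hM0mul (rvec w1)] at hw1ker
  have hw1A : (rmat A).mulVec (rvec w1) = 0 := by
    funext i
    simpa using congrFun hw1ker (Sum.inl i)
  have hw1B : ∀ i, (rmat B).mulVec zs i = 0 → (rmat B).mulVec (rvec w1) i = 0 := by
    intro i h0
    have h := congrFun hw1ker (Sum.inr i)
    rw [Sum.elim_inr, hB2row, if_pos h0] at h
    simpa using h
  have hrvw1ne : rvec w1 ≠ 0 := by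
    intro h
    apply hw1ne
    funext i
    have h2 : ((w1 i : ℤ) : ℝ) = (0 : ℝ) := congrFun h i
    exact_mod_cast h2
  obtain ⟨t1, ht1⟩ := hkey (rvec w1) hw1A hw1B
  have ht1ne : t1 ≠ 0 := by
    intro h; rw [h, zero_smul] at ht1; exact hrvw1ne ht1
  obtain ⟨w2, t2, ht2pos, hw2, hw2ne⟩ :
      ∃ (w2 : Fin n → ℤ) (t2 : ℝ), 0 < t2 ∧ rvec w2 = t2 • zs ∧ w2 ≠ 0 := by
    rcases ht1ne.lt_or_gt with hneg | hpos
    · refine ⟨-w1, -t1, by linarith, ?_, by simpa using hw1ne⟩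
      funext i
      have h9 := congrFun ht1 i
      simp only [rvec, Pi.smul_apply, smul_eq_mul] at h9 ⊢
      push_cast
      simp only [Pi.neg_apply]
      push_cast
      rw [show ((w1 i : ℤ) : ℝ) = t1 * zs i from h9]
      ring
    · exact ⟨w1, t1, hpos, ht1, hw1ne⟩
  set G : ℤ := Finset.univ.gcd w2 with hG
  have hGne : G ≠ 0 := by
    intro h
    exact hw2ne (funext fun i => Finset.gcd_eq_zero_iff.mp h i (Finset.mem_univ i))
  have hGnonneg : 0 ≤ G := by
    have h1 : |G| = G := by rw [Int.abs_eq_normalize]; exact Finset.normalize_gcd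
    rw [← h1]; exact abs_nonneg G
  have hGpos : 0 < G := lt_of_le_of_ne hGnonneg (Ne.symm hGne)
  set gz : Fin n → ℤ := fun i => w2 i / G with hgz
  have hgcast : ∀ i, ((gz i : ℤ) : ℝ) = (G : ℝ)⁻¹ * (w2 i : ℝ) := by
    intro i
    simp only [hgz]
    rw [Int.cast_div_charZero (Finset.gcd_dvd (Finset.mem_univ i))]
    ring
  set t' : ℝ := t2 / (G : ℝ) with ht'
  have hGRpos : (0:ℝ) < (G:ℝ) := by exact_mod_cast hGpos
  have ht'pos : 0 < t' := div_pos ht2pos hGRpos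
  have ht'ne : t' ≠ 0 := ne_of_gt ht'pos
  set g : Fin n → ℝ := fun i => ((gz i : ℤ) : ℝ) with hgdef
  have hgts : g = t' • zs := by
    funext i
    have h10 := congrFun hw2 i
    simp only [rvec, Pi.smul_apply, smul_eq_mul] at h10
    show ((gz i : ℤ) : ℝ) = (t' • zs) i
    rw [hgcast i, h10]
    simp only [Pi.smul_apply, smul_eq_mul, ht']
    ring
  have hcop : Finset.univ.gcd (fun i => (gz i).natAbs) = 1 := by
    obtain ⟨i0, hi0⟩ := Function.ne_iff.mp hw2ne
    have h1 : Finset.univ.gcd gz = 1 := by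
      simp only [hgz, hG]
      exact Finset.gcd_div_eq_one (Finset.mem_univ i0) hi0
    have h2 := aux_natAbs_gcd (Finset.univ : Finset (Fin n)) gz
    rw [h1] at h2
    exact h2.symm
  have hgC : g ∈ C := by rw [hgts]; exact hCsmul _ ht'pos.le _ hzsC
  have hgne : g ≠ 0 := by
    rw [hgts]
    exact smul_ne_zero ht'ne hzsne
  have hnorm1zs : norm1 zs = 1 := by rw [← hLnorm zs hzsC]; exact hzsQ.2
  refine ⟨g, ⟨⟨hgne, ?_, ?_⟩, ⟨gz, fun i => rfl, hcop⟩⟩, ?_, ?_, ?_⟩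
  · rw [hgts, Matrix.mulVec_smul, hzsC.1, smul_zero]
  · intro y hy hAy
    have hset : {i | (rmat B).mulVec g i ≠ 0} = {i | (rmat B).mulVec zs i ≠ 0} := by
      ext i
      rw [hgts, Matrix.mulVec_smul]
      simp only [Set.mem_setOf_eq, Pi.smul_apply, smul_eq_mul, ne_eq, mul_eq_zero, not_or]
      constructor
      · rintro ⟨-, h⟩; exact h
      · intro h; exact ⟨ht'ne, h⟩
    rw [hset]
    exact hmin y hy hAy
  · obtain ⟨ε0, hε0, hmem⟩ := aux_feas_of_cone A B b d x hxP zs hzsC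
    refine ⟨ε0 / t', div_pos hε0 ht'pos, ?_⟩
    rw [hgts, smul_smul, div_mul_cancel₀ _ ht'ne]
    exact hmem
  · intro g' hg' hfeas'
    obtain ⟨hcirc', -⟩ := hg'
    have hg'ne : g' ≠ 0 := hcirc'.1
    obtain ⟨ε', hε', hmem'⟩ := hfeas'
    have hg'C : g' ∈ C := aux_cone_of_feas A B b d x hxP g' ε' hε' hmem'
    have hν : 0 < norm1 g' := norm1_pos hg'ne
    have hz'Q : (norm1 g')⁻¹ • g' ∈ Q := by
      refine ⟨hCsmul _ (inv_nonneg.mpr hν.le) _ hg'C, ?_⟩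
      rw [map_smul, smul_eq_mul, hLnorm g' hg'C, inv_mul_cancel₀ (ne_of_gt hν)]
    have hle := hmaxQ _ hz'Q
    rw [map_smul, smul_eq_mul, hLcdot, hLcdot] at hle
    have hRHS : -(dotIC c g) / norm1 g = -(dotIC c zs) := by
      rw [hgts, dotIC_smul, norm1_smul_nonneg ht'pos.le, hnorm1zs]
      field_simp
    rw [hRHS]
    calc -(dotIC c g') / norm1 g' = (norm1 g')⁻¹ * -(dotIC c g') := by
          rw [div_eq_inv_mul]
    _ ≤ -(dotIC c zs) := hle
  · refine ⟨hgne, hgC, ?_⟩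
    intro y1 hy1 z1 hz1 hsum
    have hzs_split : zs = t'⁻¹ • y1 + t'⁻¹ • z1 := by
      have h11 : t'⁻¹ • g = zs := by rw [hgts, inv_smul_smul₀ ht'ne]
      rw [← h11, hsum, smul_add]
    set y' := t'⁻¹ • y1 with hy'
    set z' := t'⁻¹ • z1 with hz'
    have hy'C : y' ∈ C := hCsmul _ (inv_nonneg.mpr ht'pos.le) _ hy1
    have hz'C : z' ∈ C := hCsmul _ (inv_nonneg.mpr ht'pos.le) _ hz1
    have hsumL : L y' + L z' = 1 := by
      rw [← map_add, ← hzs_split]; exact hzsQ.2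
    have hy'nonneg : 0 ≤ L y' := by rw [hLnorm _ hy'C]; exact norm1_nonneg _
    have hz'nonneg : 0 ≤ L z' := by rw [hLnorm _ hz'C]; exact norm1_nonneg _
    by_cases hA0 : L y' = 0
    · refine ⟨0, le_refl 0, ?_⟩
      have h12 : y' = 0 := norm1_eq_zero (by rw [← hLnorm _ hy'C]; exact hA0)
      have h16 : t' • y' = y1 := smul_inv_smul₀ ht'ne y1
      have hy10 : y1 = 0 := by rw [← h16, h12, smul_zero]
      rw [hy10, zero_smul]
    by_cases hB0 : L z' = 0
    · refine ⟨1, zero_le_one, ?_⟩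
      have hz10 : z' = 0 := norm1_eq_zero (by rw [← hLnorm _ hz'C]; exact hB0)
      have h14 : y' = zs := by
        rw [hzs_split, hz10, add_zero]
      have h16 : t' • y' = y1 := smul_inv_smul₀ ht'ne y1
      have hy1g : y1 = g := by rw [← h16, h14, hgts]
      rw [hy1g, one_smul]
    have ha : 0 < L y' := lt_of_le_of_ne hy'nonneg (Ne.symm hA0)
    have hbb : 0 < L z' := lt_of_le_of_ne hz'nonneg (Ne.symm hB0)
    set pp := (L y')⁻¹ • y' with hpp
    set qq := (L z')⁻¹ • z' with hqq
    have hppQ : pp ∈ Q := ⟨hCsmul _ (inv_nonneg.mpr ha.le) _ hy'C, by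
      rw [hpp, map_smul, smul_eq_mul, inv_mul_cancel₀ (ne_of_gt ha)]⟩
    have hqqQ : qq ∈ Q := ⟨hCsmul _ (inv_nonneg.mpr hbb.le) _ hz'C, by
      rw [hqq, map_smul, smul_eq_mul, inv_mul_cancel₀ (ne_of_gt hbb)]⟩
    have hseg2 : zs ∈ openSegment ℝ pp qq := by
      refine ⟨L y', L z', ha, hbb, hsumL, ?_⟩
      rw [hpp, hqq, smul_inv_smul₀ (ne_of_gt ha), smul_inv_smul₀ (ne_of_gt hbb)]
      exact hzs_split.symm
    have hps2 := (hzsQext.2 hppQ hqqQ hseg2)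
    refine ⟨L y', ha.le, ?_⟩
    have hy'eq : y' = (L y') • zs := by
      have h15 := congrArg (fun v => (L y') • v) hps2
      simp only [hpp] at h15
      rw [smul_inv_smul₀ (ne_of_gt ha)] at h15
      exact h15
    have h15 := congrArg (fun v => t' • v) hy'eq
    have h16 : t' • y' = y1 := smul_inv_smul₀ ht'ne y1
    rw [h16] at h15
    rw [h15, hgts, smul_smul, smul_smul, mul_comm]
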